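/- Let π be a group and γ, δ ∈ π with γ ≠ δ. Then H_{γ,e} ∩ H_{δ,e} = H_{γ, δ⁻¹γ}; in particular, the intersection of two distinct conjugates (γ,e)·Δ(π)·(γ⁻¹,e) and (δ,e)·Δ(π)·(δ⁻¹,e) of the diagonal equals (γ,e)·Δ(Z_π(δ⁻¹γ))·(γ⁻¹,e). -/
import Mathlib


/-- The diagonal homomorphism `π → π × π`. -/
def diagHom (π : Type*) [Group π] : π →* π × π :=
  MonoidHom.prod (MonoidHom.id π) (MonoidHom.id π)

/-- The subgroup `H_{γ,S} = (γ,e)·Δ(Z_π(S))·(γ⁻¹,e)` of `π × π`. -/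
def Hsub {π : Type*} [Group π] (γ : π) (S : Set π) : Subgroup (π × π) :=
  Subgroup.map (MulAut.conj ((γ, (1 : π)) : π × π)).toMonoidHom
    (Subgroup.map (diagHom π) (Subgroup.centralizer S))

lemma mem_Hsub {π : Type*} [Group π] (γ : π) (S : Set π) (x : π × π) :
    x ∈ Hsub γ S ↔ ∃ z ∈ Subgroup.centralizer S, x = (γ * z * γ⁻¹, z) := by
  simp only [Hsub, Subgroup.mem_map, MulEquiv.coe_toMonoidHom, MulAut.conj_apply]
  constructor
  · rintro ⟨y, ⟨z, hz, rfl⟩, rfl⟩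
    exact ⟨z, hz, by simp [diagHom, Prod.ext_iff, mul_assoc]⟩
  · rintro ⟨z, hz, rfl⟩
    exact ⟨(z, z), ⟨z, hz, rfl⟩, by simp [Prod.ext_iff, mul_assoc]⟩

/-- For `γ ≠ δ`, `H_{γ,e} ∩ H_{δ,e} = H_{γ,δ⁻¹γ}`, i.e. the intersection of the two distinct
conjugates `(γ,e)·Δ(π)·(γ⁻¹,e)` and `(δ,e)·Δ(π)·(δ⁻¹,e)` of the diagonal equals
`(γ,e)·Δ(Z_π(δ⁻¹γ))·(γ⁻¹,e)`. -/
theorem Hsub_e_inter {π : Type*} [Group π] (γ δ : π) (hne : γ ≠ δ) :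
    Hsub γ ({1} : Set π) ⊓ Hsub δ ({1} : Set π) = Hsub γ ({δ⁻¹ * γ} : Set π) := by
  ext x
  simp only [Subgroup.mem_inf, mem_Hsub]
  constructor
  · rintro ⟨⟨z, _, rfl⟩, ⟨w, _, hw⟩⟩
    obtain ⟨h1, h2⟩ := Prod.mk.injEq .. ▸ hw
    subst h2
    refine ⟨z, ?_, rfl⟩
    intro s hs
    rcases hs with rfl
    have : γ * z * γ⁻¹ = δ * z * δ⁻¹ := h1
    calc δ⁻¹ * γ * z = δ⁻¹ * (γ * z * γ⁻¹) * γ := by group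
        _ = δ⁻¹ * (δ * z * δ⁻¹) * γ := by rw [this]
        _ = z * (δ⁻¹ * γ) := by group
  · rintro ⟨z, hz, rfl⟩
    refine ⟨⟨z, by simp [Subgroup.mem_centralizer_iff], rfl⟩,
      ⟨z, by simp [Subgroup.mem_centralizer_iff], ?_⟩⟩
    have h := Subgroup.mem_centralizer_iff.mp hz _ (Set.mem_singleton (δ⁻¹ * γ))
    have : γ * z * γ⁻¹ = δ * z * δ⁻¹ := by
      have := h -- z * (δ⁻¹*γ) = (δ⁻¹*γ) * z
      calc γ * z * γ⁻¹ = δ * ((δ⁻¹ * γ) * z) * γ⁻¹ := by group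
        _ = δ * (z * (δ⁻¹ * γ)) * γ⁻¹ := by rw [← this]
        _ = δ * z * δ⁻¹ := by group
    rw [this]
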